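/- arXiv:2408.09488 — 8 statements merged into one kernel-verified Lean document; each statement's English description precedes it below -/
import Mathlib

section
/- (Joyal) Let C be a bicartesian closed category in which A is isomorphic to the double negation [[A,0],0] for every object A. Then C is a preorder, i.e., for any two objects A and B there is at most one morphism from A to B. -/
open CategoryTheory CategoryTheory.Limits

/-- (Joyal) A bicartesian closed category in which every object `A` is isomorphic to its
double negation `[[A,0],0]` is a preorder: any two parallel morphisms are equal. -/
theorem stmt1 {C : Type*} [Category C] [CartesianMonoidalCategory C] [MonoidalClosed C]
    [HasBinaryCoproducts C] [HasInitial C]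
    (h : ∀ A : C, Nonempty (A ≅ (ihom ((ihom A).obj (⊥_ C))).obj (⊥_ C))) :
    ∀ (A B : C), Subsingleton (A ⟶ B) := by
  intro A B
  constructor
  intro f g
  obtain ⟨e⟩ := h B
  have key : f ≫ e.hom = g ≫ e.hom := by
    apply MonoidalClosed.uncurry_injective
    set u := MonoidalClosed.uncurry (f ≫ e.hom) with hu
    haveI : IsIso u := strict_initial initialIsInitial u
    exact (IsInitial.ofIso initialIsInitial (asIso u).symm).hom_ext _ _
  have := congrArg (· ≫ e.inv) key
  simpa using this
end

section
/- Let (C, ⊗, I) be a symmetric monoidal category equipped with a commutative comonoid structure on every object (maps ⟨⟩_A : A → I and Δ_A : A → A ⊗ A satisfying co-associativity, co-unitality, co-symmetry, and the compatibility conditions with ⊗ and I). If both ⟨⟩ and Δ are natural in A, then I is a terminal object and A ⊗ B, equipped with the projections p₀ = ρ_A ∘ (id_A ⊗ ⟨⟩_B) and p₁ = λ_B ∘ (⟨⟩_A ⊗ id_B), is a binary product of A and B. -/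
open CategoryTheory CategoryTheory.Limits CategoryTheory.MonoidalCategory

open BraidedCategory

private lemma swapAux {C : Type*} [Category C] [MonoidalCategory C] [SymmetricCategory C]
    (A B : C) (f : A ⟶ 𝟙_ C) (g : B ⟶ 𝟙_ C) :
    (α_ A A (B ⊗ B)).hom
      ≫ (𝟙 A ⊗ₘ ((α_ A B B).inv ≫ ((β_ A B).hom ⊗ₘ 𝟙 B) ≫ (α_ B A B).hom))
      ≫ (α_ A B (A ⊗ B)).inv
      ≫ (((𝟙 A ⊗ₘ g) ≫ (ρ_ A).hom) ⊗ₘ ((f ⊗ₘ 𝟙 B) ≫ (λ_ B).hom))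
    = ((𝟙 A ⊗ₘ f) ≫ (ρ_ A).hom) ⊗ₘ ((g ⊗ₘ 𝟙 B) ≫ (λ_ B).hom) := by
  simp [MonoidalCategory.tensorHom_def]
  simp only [← MonoidalCategory.whiskerLeft_comp]
  congr 1
  rw [← comp_whiskerRight_assoc, ← braiding_naturality_right]
  simp only [comp_whiskerRight, Category.assoc, braiding_tensorUnit_right,
    MonoidalCategory.whiskerRight_id]
  simp [← whisker_exchange_assoc, ← whisker_exchange]
  slice_lhs 2 3 => rw [whisker_exchange]
  slice_lhs 1 2 => rw [whisker_exchange]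
  slice_rhs 4 5 => rw [← leftUnitor_naturality]
  monoidal

private lemma invAux {C : Type*} [Category C] [MonoidalCategory C] [SymmetricCategory C]
    (A B : C) :
    ((α_ A B (A ⊗ B)).hom
      ≫ (𝟙 A ⊗ₘ ((α_ B A B).inv ≫ ((β_ B A).hom ⊗ₘ 𝟙 B) ≫ (α_ A B B).hom))
      ≫ (α_ A A (B ⊗ B)).inv)
    ≫ ((α_ A A (B ⊗ B)).hom
      ≫ (𝟙 A ⊗ₘ ((α_ A B B).inv ≫ ((β_ A B).hom ⊗ₘ 𝟙 B) ≫ (α_ B A B).hom))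
      ≫ (α_ A B (A ⊗ B)).inv) = 𝟙 _ := by
  simp [MonoidalCategory.tensorHom_def]
  slice_lhs 3 4 =>
    rw [← MonoidalCategory.whiskerLeft_comp, ← comp_whiskerRight,
      SymmetricCategory.symmetry]
  simp

set_option maxHeartbeats 1000000 in
private lemma prodAux {C : Type*} [Category C] [MonoidalCategory C] [SymmetricCategory C]
    (e : ∀ A : C, A ⟶ 𝟙_ C) (Δ : ∀ A : C, A ⟶ A ⊗ A)
    (counit_left : ∀ A : C, Δ A ≫ (e A ⊗ₘ 𝟙 A) ≫ (λ_ A).hom = 𝟙 A)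
    (counit_right : ∀ A : C, Δ A ≫ (𝟙 A ⊗ₘ e A) ≫ (ρ_ A).hom = 𝟙 A)
    (Δ_tensor : ∀ A B : C,
      Δ (A ⊗ B) ≫ (α_ A B (A ⊗ B)).hom
        ≫ (𝟙 A ⊗ₘ ((α_ B A B).inv ≫ ((β_ B A).hom ⊗ₘ 𝟙 B) ≫ (α_ A B B).hom))
        ≫ (α_ A A (B ⊗ B)).inv
      = Δ A ⊗ₘ Δ B)
    (e_nat : ∀ {A B : C} (f : A ⟶ B), f ≫ e B = e A)
    (Δ_nat : ∀ {A B : C} (f : A ⟶ B), f ≫ Δ B = Δ A ≫ (f ⊗ₘ f))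
    (A B : C) :
    Nonempty (IsLimit (BinaryFan.mk
      ((𝟙 A ⊗ₘ e B) ≫ (ρ_ A).hom) ((e A ⊗ₘ 𝟙 B) ≫ (λ_ B).hom))) := by
  -- the key identity: Δ_{A⊗B} followed by the two projections tensored is the identity
  have key : Δ (A ⊗ B) ≫ (((𝟙 A ⊗ₘ e B) ≫ (ρ_ A).hom) ⊗ₘ ((e A ⊗ₘ 𝟙 B) ≫ (λ_ B).hom))
      = 𝟙 (A ⊗ B) := by
    have h1 := invAux A B
    have h2 := swapAux A B (e A) (e B)
    calc Δ (A ⊗ B) ≫ (((𝟙 A ⊗ₘ e B) ≫ (ρ_ A).hom) ⊗ₘ ((e A ⊗ₘ 𝟙 B) ≫ (λ_ B).hom))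
        = Δ (A ⊗ B) ≫ (((α_ A B (A ⊗ B)).hom
            ≫ (𝟙 A ⊗ₘ ((α_ B A B).inv ≫ ((β_ B A).hom ⊗ₘ 𝟙 B) ≫ (α_ A B B).hom))
            ≫ (α_ A A (B ⊗ B)).inv)
          ≫ ((α_ A A (B ⊗ B)).hom
            ≫ (𝟙 A ⊗ₘ ((α_ A B B).inv ≫ ((β_ A B).hom ⊗ₘ 𝟙 B) ≫ (α_ B A B).hom))
            ≫ (α_ A B (A ⊗ B)).inv))
          ≫ (((𝟙 A ⊗ₘ e B) ≫ (ρ_ A).hom) ⊗ₘ ((e A ⊗ₘ 𝟙 B) ≫ (λ_ B).hom)) := by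
          rw [h1]; simp
      _ = (Δ A ⊗ₘ Δ B) ≫ (((𝟙 A ⊗ₘ e A) ≫ (ρ_ A).hom) ⊗ₘ ((e B ⊗ₘ 𝟙 B) ≫ (λ_ B).hom)) := by
          have h3 := Δ_tensor A B
          simp only [Category.assoc] at h2 h3 ⊢
          rw [← reassoc_of% h3, h2]
      _ = (Δ A ≫ (𝟙 A ⊗ₘ e A) ≫ (ρ_ A).hom) ⊗ₘ (Δ B ≫ (e B ⊗ₘ 𝟙 B) ≫ (λ_ B).hom) := by
          rw [tensorHom_comp_tensorHom]
      _ = 𝟙 (A ⊗ B) := by rw [counit_right, counit_left, id_tensorHom_id]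
  refine ⟨BinaryFan.isLimitMk (fun s => Δ s.pt ≫ (s.fst ⊗ₘ s.snd)) ?_ ?_ ?_⟩
  · intro s
    obtain ⟨f, hf⟩ : ∃ f : s.pt ⟶ A, s.fst = f := ⟨_, rfl⟩
    obtain ⟨g, hg⟩ : ∃ g : s.pt ⟶ B, s.snd = g := ⟨_, rfl⟩
    rw [hf, hg]
    simp only [BinaryFan.mk_fst, Category.assoc, tensorHom_comp_tensorHom_assoc, e_nat,
      Category.comp_id, Category.id_comp]
    rw [show f ⊗ₘ e s.pt = (𝟙 s.pt ⊗ₘ e s.pt) ≫ (f ⊗ₘ 𝟙 (𝟙_ C)) by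
      rw [tensorHom_comp_tensorHom]; simp]
    rw [Category.assoc, tensorHom_id, rightUnitor_naturality]
    rw [← Category.assoc, ← Category.assoc, Category.assoc (Δ s.pt), counit_right,
      Category.id_comp]
  · intro s
    obtain ⟨f, hf⟩ : ∃ f : s.pt ⟶ A, s.fst = f := ⟨_, rfl⟩
    obtain ⟨g, hg⟩ : ∃ g : s.pt ⟶ B, s.snd = g := ⟨_, rfl⟩
    rw [hf, hg]
    simp only [BinaryFan.mk_snd, Category.assoc, tensorHom_comp_tensorHom_assoc, e_nat,
      Category.comp_id, Category.id_comp]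
    rw [show e s.pt ⊗ₘ g = (e s.pt ⊗ₘ 𝟙 s.pt) ≫ (𝟙 (𝟙_ C) ⊗ₘ g) by
      rw [tensorHom_comp_tensorHom]; simp]
    rw [Category.assoc, id_tensorHom, leftUnitor_naturality]
    rw [← Category.assoc, ← Category.assoc, Category.assoc (Δ s.pt), counit_left,
      Category.id_comp]
  · intro s m hfst hsnd
    calc m = m ≫ 𝟙 (A ⊗ B) := by rw [Category.comp_id]
      _ = m ≫ Δ (A ⊗ B) ≫ (((𝟙 A ⊗ₘ e B) ≫ (ρ_ A).hom) ⊗ₘ ((e A ⊗ₘ 𝟙 B) ≫ (λ_ B).hom)) := by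
          rw [key]
      _ = Δ s.pt ≫ (m ⊗ₘ m) ≫ (((𝟙 A ⊗ₘ e B) ≫ (ρ_ A).hom) ⊗ₘ ((e A ⊗ₘ 𝟙 B) ≫ (λ_ B).hom)) := by
          rw [← Category.assoc, Δ_nat m, Category.assoc]
      _ = Δ s.pt ≫ (MonoidalCategoryStruct.tensorHom (X₁ := s.pt) (Y₁ := A) (X₂ := s.pt) (Y₂ := B) s.fst s.snd) := by
          rw [tensorHom_comp_tensorHom, hfst, hsnd]


/-- If a symmetric monoidal category carries a commutative comonoid structure on every
object (deleting `e` and cloning `Δ`, satisfying co-associativity, co-unitality,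
co-symmetry and the compatibility conditions with `⊗` and `I`) which is moreover
natural (uniform) in the object, then the unit `I` is a terminal object and
`A ⊗ B`, equipped with the projections `p₀ = (id_A ⊗ e_B) ≫ ρ_A` and
`p₁ = (e_A ⊗ id_B) ≫ λ_B`, is a binary product of `A` and `B`. -/
theorem stmt3 {C : Type*} [Category C] [MonoidalCategory C] [SymmetricCategory C]
    (e : ∀ A : C, A ⟶ 𝟙_ C) (Δ : ∀ A : C, A ⟶ A ⊗ A)
    (coassoc : ∀ A : C, Δ A ≫ (Δ A ⊗ₘ 𝟙 A) ≫ (α_ A A A).hom = Δ A ≫ (𝟙 A ⊗ₘ Δ A))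
    (counit_left : ∀ A : C, Δ A ≫ (e A ⊗ₘ 𝟙 A) ≫ (λ_ A).hom = 𝟙 A)
    (counit_right : ∀ A : C, Δ A ≫ (𝟙 A ⊗ₘ e A) ≫ (ρ_ A).hom = 𝟙 A)
    (cosymm : ∀ A : C, Δ A ≫ (β_ A A).hom = Δ A)
    (e_unit : e (𝟙_ C) = 𝟙 (𝟙_ C))
    (Δ_unit : Δ (𝟙_ C) = (λ_ (𝟙_ C)).inv)
    (Δ_tensor : ∀ A B : C,
      Δ (A ⊗ B) ≫ (α_ A B (A ⊗ B)).hom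
        ≫ (𝟙 A ⊗ₘ ((α_ B A B).inv ≫ ((β_ B A).hom ⊗ₘ 𝟙 B) ≫ (α_ A B B).hom))
        ≫ (α_ A A (B ⊗ B)).inv
      = Δ A ⊗ₘ Δ B)
    (e_tensor : ∀ A B : C, e (A ⊗ B) = (e A ⊗ₘ e B) ≫ (λ_ (𝟙_ C)).hom)
    (e_nat : ∀ {A B : C} (f : A ⟶ B), f ≫ e B = e A)
    (Δ_nat : ∀ {A B : C} (f : A ⟶ B), f ≫ Δ B = Δ A ≫ (f ⊗ₘ f)) :
    Nonempty (IsTerminal (𝟙_ C)) ∧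
    ∀ A B : C, Nonempty (IsLimit (BinaryFan.mk
      ((𝟙 A ⊗ₘ e B) ≫ (ρ_ A).hom) ((e A ⊗ₘ 𝟙 B) ≫ (λ_ B).hom))) := by
  constructor
  · refine ⟨IsTerminal.ofUniqueHom (fun A => e A) (fun A m => ?_)⟩
    have h := e_nat m
    rw [e_unit, Category.comp_id] at h
    exact h
  · intro A B
    exact prodAux e Δ counit_left counit_right Δ_tensor @e_nat @Δ_nat A B
end

section
/- (No-deleting theorem) Let (C, ⊗, I, [-,-], ⊥) be a compact closed category. If there is a natural transformation ⟨⟩_A : A → I with ⟨⟩_I = id_I, then every hom-set Hom(A, B) is a singleton. -/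
open CategoryTheory CategoryTheory.Limits CategoryTheory.MonoidalCategory

/-- (No-deleting theorem) Let `C` be a compact closed category: a symmetric monoidal
closed category with a dualizing object `⊥` (the canonical map `A ⟶ [[A,⊥],⊥]` is an
isomorphism for all `A`) such that `[A,B] ≅ ¬A ⊗ B` naturally in `A` and `B`, where
`¬A = [A,⊥]`.  If there is a natural transformation `e_A : A ⟶ I` with `e_I = id_I`,
then every hom-set `Hom(A,B)` is a singleton. -/
theorem stmt4 {C : Type*} [Category C] [MonoidalCategory C] [SymmetricCategory C]
    [MonoidalClosed C] (bot : C)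
    (hdual : ∀ A : C, IsIso (MonoidalClosed.curry
      ((β_ ((ihom A).obj bot) A).hom ≫ (ihom.ev A).app bot)))
    (κ : ∀ A B : C, (ihom A).obj B ≅ (ihom A).obj bot ⊗ B)
    (κ_natB : ∀ (A : C) {B B' : C} (g : B ⟶ B'),
      (ihom A).map g ≫ (κ A B').hom = (κ A B).hom ≫ (𝟙 ((ihom A).obj bot) ⊗ₘ g))
    (κ_natA : ∀ {A A' : C} (f : A ⟶ A') (B : C),
      (MonoidalClosed.pre f).app B ≫ (κ A B).hom
        = (κ A' B).hom ≫ ((MonoidalClosed.pre f).app bot ⊗ₘ 𝟙 B))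
    (e : ∀ A : C, A ⟶ 𝟙_ C)
    (e_nat : ∀ {A B : C} (f : A ⟶ B), f ≫ e B = e A)
    (e_unit : e (𝟙_ C) = 𝟙 (𝟙_ C)) :
    ∀ A B : C, Nonempty (A ⟶ B) ∧ Subsingleton (A ⟶ B) := by
  -- From κ at the unit we get `bot ≅ 𝟙_ C`.
  have u : bot ≅ 𝟙_ C :=
    (MonoidalClosed.unitNatIso (C := C)).app bot ≪≫ (ρ_ _).symm ≪≫
      (κ (𝟙_ C) (𝟙_ C)).symm ≪≫ ((MonoidalClosed.unitNatIso (C := C)).app (𝟙_ C)).symm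
  -- Every hom into the unit is the deleting map.
  have hI : ∀ (Y : C) (f : Y ⟶ 𝟙_ C), f = e Y := by
    intro Y f
    have := e_nat f
    rwa [e_unit, Category.comp_id] at this
  intro A B
  have := hdual B
  let d : B ≅ (ihom ((ihom B).obj bot)).obj bot :=
    asIso (MonoidalClosed.curry ((β_ ((ihom B).obj bot) B).hom ≫ (ihom.ev B).app bot))
  let E : (A ⟶ B) ≃ ((ihom B).obj bot ⊗ A ⟶ 𝟙_ C) :=
    ((Iso.refl A).homCongr d).trans
      ((((ihom.adjunction ((ihom B).obj bot)).homEquiv A bot).symm).trans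
        ((Iso.refl _).homCongr u))
  refine ⟨⟨E.symm (e _)⟩, ⟨fun f g => E.injective ?_⟩⟩
  rw [hI _ (E f), hI _ (E g)]
end

section
/- In any bicartesian closed category, the coproduct injections i₀ : A → A + B and i₁ : B → A + B are monomorphisms. -/
open CategoryTheory CategoryTheory.Limits

lemma aux_cancel {C : Type*} [Category C] [CartesianMonoidalCategory C] [MonoidalClosed C]
    {T X : C} {f g : T ⟶ X} (h : CartesianMonoidalCategory.snd T T ≫ f =
      CartesianMonoidalCategory.snd T T ≫ g) : f = g := by
  have := CartesianMonoidalCategory.lift (𝟙 T) (𝟙 T) ≫= h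
  simpa using this

/-- In any bicartesian closed category, the coproduct injections
`i₀ : A ⟶ A ⨿ B` and `i₁ : B ⟶ A ⨿ B` are monomorphisms. -/
theorem stmt6 {C : Type*} [Category C] [CartesianMonoidalCategory C] [MonoidalClosed C]
    [HasBinaryCoproducts C] [HasInitial C] (A B : C) :
    Mono (coprod.inl : A ⟶ A ⨿ B) ∧ Mono (coprod.inr : B ⟶ A ⨿ B) := by
  constructor
  · constructor
    intro T f g h
    let k : A ⨿ B ⟶ (ihom T).obj A :=
      coprod.desc (MonoidalClosed.curry (CartesianMonoidalCategory.snd T A))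
        (MonoidalClosed.curry (CartesianMonoidalCategory.fst T B ≫ f))
    have h2 : f ≫ coprod.inl ≫ k = g ≫ coprod.inl ≫ k := by rw [reassoc_of% h]
    simp only [k, coprod.inl_desc, ← MonoidalClosed.curry_natural_left] at h2
    have h3 := congrArg MonoidalClosed.uncurry h2
    simp only [MonoidalClosed.uncurry_curry, CartesianMonoidalCategory.whiskerLeft_snd] at h3
    exact aux_cancel h3
  · constructor
    intro T f g h
    let k : A ⨿ B ⟶ (ihom T).obj B :=
      coprod.desc (MonoidalClosed.curry (CartesianMonoidalCategory.fst T A ≫ f))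
        (MonoidalClosed.curry (CartesianMonoidalCategory.snd T B))
    have h2 : f ≫ coprod.inr ≫ k = g ≫ coprod.inr ≫ k := by rw [reassoc_of% h]
    simp only [k, coprod.inr_desc, ← MonoidalClosed.curry_natural_left] at h2
    have h3 := congrArg MonoidalClosed.uncurry h2
    simp only [MonoidalClosed.uncurry_curry, CartesianMonoidalCategory.whiskerLeft_snd] at h3
    exact aux_cancel h3
end

section
/- Let C be a bicartesian closed category that is not a preorder (i.e., some hom-set contains two distinct morphisms). Then for any morphisms f : 1 → A and g : 1 → B, the composites i₀ ∘ f and i₁ ∘ g : 1 → A + B are distinct, where i₀, i₁ are the coproduct injections. -/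
open CategoryTheory CategoryTheory.Limits CategoryTheory.MonoidalCategory

/-- In a bicartesian closed category that is not a preorder, for any morphisms
`f : 1 ⟶ A` and `g : 1 ⟶ B` the composites with the two coproduct injections into
`A ⨿ B` are distinct. -/
theorem stmt7 {C : Type*} [Category C] [CartesianMonoidalCategory C] [MonoidalClosed C]
    [HasBinaryCoproducts C] [HasInitial C]
    (hnp : ∃ (X Y : C) (h k : X ⟶ Y), h ≠ k)
    {A B : C} (f : 𝟙_ C ⟶ A) (g : 𝟙_ C ⟶ B) :
    f ≫ coprod.inl ≠ g ≫ coprod.inr := by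
  obtain ⟨X, Y, h, k, hne⟩ := hnp
  intro heq
  apply hne
  have hρ : (ρ_ X).hom ≫ h = (ρ_ X).hom ≫ k := by
    apply MonoidalClosed.curry_injective
    set h' : 𝟙_ C ⟶ (ihom X).obj Y := MonoidalClosed.curry ((ρ_ X).hom ≫ h) with hh'
    set k' : 𝟙_ C ⟶ (ihom X).obj Y := MonoidalClosed.curry ((ρ_ X).hom ≫ k) with hk'
    let p : A ⨿ B ⟶ (ihom X).obj Y :=
      coprod.desc (CartesianMonoidalCategory.toUnit A ≫ h') (CartesianMonoidalCategory.toUnit B ≫ k')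
    have := congrArg (· ≫ p) heq
    simp only [p, Category.assoc] at this
    rw [coprod.inl_desc, coprod.inr_desc] at this
    simpa [p, reassoc_of% (CartesianMonoidalCategory.toUnit_unique (f ≫ CartesianMonoidalCategory.toUnit A) (𝟙 _)),
      reassoc_of% (CartesianMonoidalCategory.toUnit_unique (g ≫ CartesianMonoidalCategory.toUnit B) (𝟙 _))] using this
  exact (cancel_epi (ρ_ X).hom).mp hρ
end

section
/- Let G be a group. Define a preorder on the set Sub(G) of subgroups of G by K ≤ H iff there exists g ∈ G with g⁻¹Kg ⊆ H. For a functor E : G → Set (a G-set), let δ(E) = { H ≤ G : ∃ x ∈ E with h·x = x for all h ∈ H }. Then δ(E) is downward-closed in (Sub(G), ≤); if there is a G-equivariant map E → F then δ(E) ⊆ δ(F); conversely δ(E) ⊆ δ(F) implies the existence of a G-equivariant map E → F; and every downward-closed subset of Sub(G) arises as δ(E) for some G-set E. Hence the poset reflection of the category of G-sets is isomorphic to the poset of downward-closed subsets of (Sub(G), ≤). -/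
universe u

def DCSigma {G : Type u} [Group G] (I : Set (Subgroup G)) : Type u :=
  Σ H : I, G ⧸ (H : Subgroup G)

instance dcSMul {G : Type u} [Group G] (I : Set (Subgroup G)) : SMul G (DCSigma I) :=
  ⟨fun g x => ⟨x.1, g • x.2⟩⟩

lemma dcSMul_def {G : Type u} [Group G] (I : Set (Subgroup G)) (g : G) (x : DCSigma I) :
    g • x = ⟨x.1, g • x.2⟩ := rfl

instance dcMulAction {G : Type u} [Group G] (I : Set (Subgroup G)) : MulAction G (DCSigma I) where
  one_smul := fun ⟨H, c⟩ => by
    show (⟨H, (1 : G) • c⟩ : DCSigma I) = ⟨H, c⟩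
    rw [one_smul]
  mul_smul := fun g h ⟨H, c⟩ => by
    show (⟨H, (g * h) • c⟩ : DCSigma I) = ⟨H, g • h • c⟩
    rw [mul_smul]

/-- For a group `G`, order the subgroups by `K ≤ H` iff `g⁻¹Kg ⊆ H` for some `g`, and
for a `G`-set `X` let `δ(X) = { H : ∃ x ∈ X fixed by every element of H }`.  Then:
`δ(X)` is downward closed; a `G`-equivariant map `X → Y` exists **iff** `δ(X) ⊆ δ(Y)`;
and every downward-closed set of subgroups arises as `δ(X)` for some `G`-set `X`.
Hence the poset reflection of the category of `G`-sets is isomorphic to the poset of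
downward-closed subsets of `(Sub(G), ≤)`. -/
theorem stmt13 {G : Type u} [Group G] :
    (∀ (X : Type u) [MulAction G X] (H K : Subgroup G),
        (∃ g : G, ∀ k ∈ K, g⁻¹ * k * g ∈ H) →
        (∃ x : X, ∀ h ∈ H, h • x = x) → (∃ x : X, ∀ k ∈ K, k • x = x)) ∧
    (∀ (X Y : Type u) [MulAction G X] [MulAction G Y],
        (∃ f : X → Y, ∀ (g : G) (x : X), f (g • x) = g • f x) ↔
        (∀ H : Subgroup G,
          (∃ x : X, ∀ h ∈ H, h • x = x) → (∃ y : Y, ∀ h ∈ H, h • y = y))) ∧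
    (∀ I : Set (Subgroup G),
        (∀ H ∈ I, ∀ K : Subgroup G, (∃ g : G, ∀ k ∈ K, g⁻¹ * k * g ∈ H) → K ∈ I) →
        ∃ (X : Type u) (inst : MulAction G X),
          letI : MulAction G X := inst
          ∀ H : Subgroup G, H ∈ I ↔ ∃ x : X, ∀ h ∈ H, h • x = x) := by
  refine ⟨?_, ?_, ?_⟩
  · rintro X _ H K ⟨g, hg⟩ ⟨x, hx⟩
    refine ⟨g • x, fun k hk => ?_⟩
    have := hx _ (hg k hk)
    calc k • g • x = (g * (g⁻¹ * k * g)) • x := by rw [← mul_smul]; group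
    _ = g • ((g⁻¹ * k * g) • x) := by rw [mul_smul]
    _ = g • x := by rw [this]
  · intro X Y _ _
    constructor
    · rintro ⟨f, hf⟩ H ⟨x, hx⟩
      exact ⟨f x, fun h hh => by rw [← hf, hx h hh]⟩
    · intro hδ
      choose y hy using fun x : X =>
        hδ (MulAction.stabilizer G x) ⟨x, fun h hh => hh⟩
      by_cases hX : Nonempty X
      · -- representative of each orbit
        let rep : X → X := fun x => (Quotient.mk (MulAction.orbitRel G X) x).out
        have hrep : ∀ x : X, ∃ g : G, g • rep x = x := by
          intro x
          have : (Quotient.mk (MulAction.orbitRel G X) x).out ∈ MulAction.orbit G x := by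
            have := Quotient.mk_out (s := MulAction.orbitRel G X) x
            exact this
          obtain ⟨g, hg⟩ := this
          exact ⟨g⁻¹, by rw [show rep x = g • x from hg.symm, ← mul_smul, inv_mul_cancel, one_smul]⟩
        choose t ht using hrep
        refine ⟨fun x => t x • y (rep x), fun g x => ?_⟩
        have hreq : rep (g • x) = rep x := by
          have : Quotient.mk (MulAction.orbitRel G X) (g • x)
              = Quotient.mk (MulAction.orbitRel G X) x :=
            Quotient.sound ⟨g, rfl⟩
          simp only [rep, this]
        have hstab : (t (g • x))⁻¹ * (g * t x) ∈ MulAction.stabilizer G (rep x) := by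
          have h1 : t (g • x) • rep x = g • x := hreq ▸ ht (g • x)
          rw [MulAction.mem_stabilizer_iff, mul_smul, mul_smul, ht x, inv_smul_eq_iff]
          exact h1.symm
        have hyfix := hy (rep x) _ hstab
        calc t (g • x) • y (rep (g • x)) = t (g • x) • y (rep x) := by rw [hreq]
        _ = t (g • x) • ((t (g • x))⁻¹ * (g * t x)) • y (rep x) := by rw [hyfix]
        _ = g • t x • y (rep x) := by rw [← mul_smul, ← mul_smul]; group
      · exact ⟨fun x => absurd ⟨x⟩ hX, fun g x => absurd ⟨x⟩ hX⟩
  · intro I hI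
    refine ⟨DCSigma I, dcMulAction I, fun H => ⟨fun hH => ?_, ?_⟩⟩
    · refine ⟨⟨⟨H, hH⟩, (1 : G)⟩, fun h hh => ?_⟩
      erw [dcSMul_def]
      congr 1
      show ((h * 1 : G) : G ⧸ H) = ((1 : G) : G ⧸ H)
      rw [QuotientGroup.eq]
      simpa using hh
    · rintro ⟨⟨⟨K, hK⟩, c⟩, hc⟩
      obtain ⟨g, rfl⟩ := QuotientGroup.mk_surjective c
      refine hI K hK H ⟨g, fun h hh => ?_⟩
      have := hc h hh
      erw [dcSMul_def] at this
      have h2 : h • ((g : G) : G ⧸ K) = ((g : G) : G ⧸ K) := by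
        have := (Sigma.mk.inj_iff.mp this).2
        exact eq_of_heq this
      have h3 : ((h * g : G) : G ⧸ K) = ((g : G) : G ⧸ K) := h2
      have := (QuotientGroup.eq (s := K)).mp h3.symm
      simpa [mul_assoc] using this
end

section
/- The poset reflection of the category of ℤ-sets (sets with an automorphism, with equivariant maps) is isomorphic to the poset of downward-closed subsets of (ℕ, |)ᵒᵖ, equivalently the poset of upward-closed subsets of ℕ under divisibility. -/
/-- The subgroup of `ℤ` of powers of a permutation fixing a given point. -/
def Stmt14.fixH {A : Type} (e : Equiv.Perm A) (x : A) : AddSubgroup ℤ where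
  carrier := {j | (e ^ j) x = x}
  zero_mem' := by simp
  add_mem' := by
    intro a b ha hb
    simp only [Set.mem_setOf_eq] at *
    rw [zpow_add, Equiv.Perm.mul_apply, hb, ha]
  neg_mem' := by
    intro a ha
    simp only [Set.mem_setOf_eq] at *
    conv_lhs => rw [← ha]
    rw [← Equiv.Perm.mul_apply, ← zpow_add, neg_add_cancel, zpow_zero, Equiv.Perm.one_apply]

theorem Stmt14.exists_gen {A : Type} (e : Equiv.Perm A) (x : A) :
    ∃ g : ℕ, ∀ j : ℤ, (e ^ j) x = x ↔ (g : ℤ) ∣ j := by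
  obtain ⟨g₀, hg⟩ := Int.subgroup_cyclic (Stmt14.fixH e x)
  refine ⟨g₀.natAbs, fun j => ?_⟩
  have h1 : (e ^ j) x = x ↔ j ∈ Stmt14.fixH e x := Iff.rfl
  rw [h1, hg, AddSubgroup.mem_closure_singleton, Int.natAbs_dvd]
  constructor
  · rintro ⟨n, rfl⟩; exact Dvd.intro_left n rfl
  · rintro ⟨c, rfl⟩; exact ⟨c, by rw [smul_eq_mul, mul_comm]⟩

theorem Stmt14.exists_map {A B : Type} (e : Equiv.Perm A) (e' : Equiv.Perm B)
    (h : {n : ℕ | ∃ x : A, (e ^ n) x = x} ⊆ {n : ℕ | ∃ y : B, (e' ^ n) y = y}) :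
    ∃ f : A → B, ∀ x, f (e x) = e' (f x) := by
  rcases isEmpty_or_nonempty A with hA | hA
  · exact ⟨fun x => (hA.false x).elim, fun x => (hA.false x).elim⟩
  let s : Setoid A := ⟨fun x y => ∃ k : ℤ, (e ^ k) x = y,
    ⟨fun x => ⟨0, by simp⟩,
     fun {x y} hxy => by
       obtain ⟨k, hk⟩ := hxy
       exact ⟨-k, by rw [← hk, ← Equiv.Perm.mul_apply, ← zpow_add, neg_add_cancel, zpow_zero,
         Equiv.Perm.one_apply]⟩,
     fun {x y z} hxy hyz => by
       obtain ⟨k, hk⟩ := hxy; obtain ⟨l, hl⟩ := hyz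
       exact ⟨l + k, by rw [zpow_add, Equiv.Perm.mul_apply, hk, hl]⟩⟩⟩
  have gex : ∀ q : Quotient s, ∃ g : ℕ, ∀ j : ℤ, (e ^ j) q.out = q.out ↔ (g : ℤ) ∣ j :=
    fun q => Stmt14.exists_gen e q.out
  choose g gspec using gex
  have yex : ∀ q : Quotient s, ∃ y : B, (e' ^ (g q : ℕ)) y = y := by
    intro q
    apply h
    exact ⟨q.out, by rw [← zpow_natCast]; exact (gspec q _).2 dvd_rfl⟩
  choose y yspec using yex
  have yfix : ∀ (q : Quotient s) (m : ℤ), (g q : ℤ) ∣ m → (e' ^ m) (y q) = y q := by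
    intro q m hm
    obtain ⟨c, rfl⟩ := hm
    have hy : ((g q : ℤ)) ∈ Stmt14.fixH e' (y q) := by
      show (e' ^ ((g q : ℕ) : ℤ)) (y q) = y q
      rw [zpow_natCast]; exact yspec q
    have := AddSubgroup.zsmul_mem _ hy c
    rw [smul_eq_mul, mul_comm] at this
    exact this
  have kex : ∀ x : A, ∃ k : ℤ, (e ^ k) (Quotient.mk s x).out = x :=
    fun x => Quotient.exact (Quotient.out_eq (Quotient.mk s x))
  choose k hk using kex
  refine ⟨fun x => (e' ^ (k x)) (y (Quotient.mk s x)), fun x => ?_⟩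
  have hq : Quotient.mk s (e x) = Quotient.mk s x :=
    Quotient.sound ⟨-1, by rw [zpow_neg_one]; exact e.symm_apply_apply x⟩
  set q := Quotient.mk s x with hqdef
  show (e' ^ (k (e x))) (y (Quotient.mk s (e x))) = e' ((e' ^ (k x)) (y q))
  rw [hq]
  have h1 : (e ^ (k (e x))) q.out = e x := by
    have := hk (e x); rwa [hq] at this
  have h2 : (e ^ (1 + k x)) q.out = e x := by
    rw [zpow_one_add, Equiv.Perm.mul_apply, hk x]
  have h3 : (e ^ (-(1 + k x) + k (e x))) q.out = q.out := by
    have h4 := congrArg (⇑(e ^ (-(1 + k x)))) (h1.trans h2.symm)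
    rwa [← Equiv.Perm.mul_apply, ← Equiv.Perm.mul_apply, ← zpow_add, ← zpow_add,
      neg_add_cancel, zpow_zero, Equiv.Perm.one_apply] at h4
  have h5 : (e' ^ (-(1 + k x) + k (e x))) (y q) = y q :=
    yfix q _ ((gspec q _).1 h3)
  have h6 : (e' ^ (k (e x))) (y q) = (e' ^ (1 + k x)) ((e' ^ (-(1 + k x) + k (e x))) (y q)) := by
    rw [← Equiv.Perm.mul_apply, ← zpow_add]
    congr 1
    ring
  rw [h6, h5, zpow_one_add, Equiv.Perm.mul_apply]

theorem Stmt14.pow_apply_sigma (S : Set ℕ) (m : ℕ) (p : (n : {n // n ∈ S}) × ZMod n.1) :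
    (((Equiv.sigmaCongrRight fun n : {n // n ∈ S} => Equiv.addRight (1 : ZMod n.1))) ^ m) p
      = ⟨p.1, p.2 + m⟩ := by
  induction m generalizing p with
  | zero => simp
  | succ m ih =>
    rw [pow_succ, Equiv.Perm.mul_apply]
    obtain ⟨n, x⟩ := p
    have h1 : (Equiv.sigmaCongrRight fun n : {n // n ∈ S} => Equiv.addRight (1 : ZMod n.1))
        ⟨n, x⟩ = ⟨n, x + 1⟩ := rfl
    rw [h1, ih ⟨n, x + 1⟩]
    exact congrArg (Sigma.mk n) (by push_cast; ring)

theorem Stmt14.delta_sigma (S : Set ℕ) (hS : ∀ m n : ℕ, m ∣ n → m ∈ S → n ∈ S) :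
    {m : ℕ | ∃ p : (n : {n // n ∈ S}) × ZMod n.1,
      (((Equiv.sigmaCongrRight fun n : {n // n ∈ S} => Equiv.addRight (1 : ZMod n.1))) ^ m) p = p}
      = S := by
  ext m
  simp only [Set.mem_setOf_eq]
  constructor
  · rintro ⟨⟨n, x⟩, hp⟩
    rw [Stmt14.pow_apply_sigma] at hp
    have h2 : x + (m : ZMod n.1) = x := eq_of_heq (Sigma.mk.inj_iff.1 hp).2
    have h3 : (m : ZMod n.1) = 0 := by rwa [add_eq_left] at h2
    have h4 : n.1 ∣ m := (CharP.cast_eq_zero_iff (ZMod n.1) n.1 m).1 h3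
    exact hS n.1 m h4 n.2
  · intro hm
    refine ⟨⟨⟨m, hm⟩, 0⟩, ?_⟩
    rw [Stmt14.pow_apply_sigma]
    exact congrArg (Sigma.mk _) (by simp [ZMod.natCast_self])

/-- The poset reflection of the category of `ℤ`-sets (sets with an automorphism, with
equivariant maps) is isomorphic to the poset of upward-closed subsets of `ℕ` under
divisibility: there is an assignment `δ` of an upward-closed (under `∣`) subset of `ℕ`
to every `ℤ`-set such that an equivariant map `E → F` exists iff `δ E ⊆ δ F`, and
every upward-closed subset of `(ℕ, ∣)` is of the form `δ E`. -/
theorem stmt14 :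
    ∃ δ : ((A : Type) × (A ≃ A)) → Set ℕ,
      (∀ (E : (A : Type) × (A ≃ A)) (m n : ℕ), m ∣ n → m ∈ δ E → n ∈ δ E) ∧
      (∀ E E' : (A : Type) × (A ≃ A),
        (∃ f : E.1 → E'.1, ∀ x : E.1, f (E.2 x) = E'.2 (f x)) ↔ δ E ⊆ δ E') ∧
      (∀ S : Set ℕ, (∀ m n : ℕ, m ∣ n → m ∈ S → n ∈ S) →
        ∃ E : (A : Type) × (A ≃ A), δ E = S) := by
  refine ⟨fun E => {n : ℕ | ∃ x : E.1, (E.2 ^ n) x = x}, ?_, ?_, ?_⟩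
  · rintro E m n hmn ⟨x, hx⟩
    obtain ⟨g, hg⟩ := Stmt14.exists_gen E.2 x
    refine ⟨x, ?_⟩
    rw [← zpow_natCast] at hx ⊢
    rw [hg] at hx ⊢
    exact hx.trans (Int.natCast_dvd_natCast.2 hmn)
  · intro E E'
    constructor
    · rintro ⟨f, hf⟩ n ⟨x, hx⟩
      have key : ∀ (k : ℕ) (z : E.1), f ((E.2 ^ k) z) = (E'.2 ^ k) (f z) := by
        intro kk
        induction kk with
        | zero => simp
        | succ kk ih =>
          intro z
          rw [pow_succ, pow_succ, Equiv.Perm.mul_apply, Equiv.Perm.mul_apply, ih, hf]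
      exact ⟨f x, by rw [← key n x, hx]⟩
    · exact fun h => Stmt14.exists_map E.2 E'.2 h
  · intro S hS
    exact ⟨⟨(n : {n // n ∈ S}) × ZMod n.1,
      Equiv.sigmaCongrRight fun n : {n // n ∈ S} => Equiv.addRight (1 : ZMod n.1)⟩,
      Stmt14.delta_sigma S hS⟩
end

section
/- Let C be a cartesian closed category with a natural numbers object (N, Z, s). If C is not a preorder (some hom-set has two distinct morphisms), then the numeral maps are injective: for m, n ∈ ℕ, if s^m ∘ Z = s^n ∘ Z as morphisms 1 → N, then m = n. -/
open CategoryTheory CategoryTheory.Limits CategoryTheory.MonoidalCategory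

/-- A natural numbers object in a category with a terminal object `𝟙_ C`:
for every `a : 1 ⟶ A` and `f : A ⟶ A` there is a unique `g : N ⟶ A` with
`g ∘ Z = a` and `g ∘ s = f ∘ g`. -/
structure IsNNO {C : Type*} [Category C] [CartesianMonoidalCategory C]
    (N : C) (Z : 𝟙_ C ⟶ N) (s : N ⟶ N) : Prop where
  ex_unique : ∀ {A : C} (a : 𝟙_ C ⟶ A) (f : A ⟶ A),
    ∃! g : N ⟶ A, Z ≫ g = a ∧ s ≫ g = g ≫ f

/-- The `n`-fold composite `s^n : N ⟶ N`. -/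
def iterateHom {C : Type*} [Category C] {N : C} (s : N ⟶ N) : ℕ → (N ⟶ N)
  | 0 => 𝟙 N
  | n + 1 => iterateHom s n ≫ s

/-- `s` admits a retraction (a predecessor map). -/
lemma exists_pred {C : Type*} [Category C] [CartesianMonoidalCategory C]
    {N : C} {Z : 𝟙_ C ⟶ N} {s : N ⟶ N} (hN : IsNNO N Z s) :
    ∃ p : N ⟶ N, s ≫ p = 𝟙 N := by
  open CartesianMonoidalCategory in
  obtain ⟨P, ⟨hPZ, hPs⟩, -⟩ :=
    hN.ex_unique (A := N ⊗ N) (lift Z Z) (lift (fst N N ≫ s) (fst N N))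
  -- fst ∘ P = id by uniqueness
  obtain ⟨q, -, hq⟩ := hN.ex_unique (A := N) Z s
  have h1 : P ≫ fst N N = 𝟙 N := by
    have ha : Z ≫ (P ≫ fst N N) = Z ∧ s ≫ (P ≫ fst N N) = (P ≫ fst N N) ≫ s := by
      constructor
      · rw [← Category.assoc, hPZ, lift_fst]
      · rw [← Category.assoc, hPs, Category.assoc, lift_fst, ← Category.assoc]
    have hb : Z ≫ (𝟙 N) = Z ∧ s ≫ (𝟙 N) = (𝟙 N) ≫ s := by simp
    rw [hq _ ha, hq _ hb]
  refine ⟨P ≫ snd N N, ?_⟩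
  rw [← Category.assoc, hPs, Category.assoc, lift_snd, h1]

theorem aux_zero {C : Type*} [Category C] [CartesianMonoidalCategory C] [MonoidalClosed C]
    {N : C} {Z : 𝟙_ C ⟶ N} {s : N ⟶ N} (hN : IsNNO N Z s)
    (hnp : ∃ (X Y : C) (f g : X ⟶ Y), f ≠ g)
    (n : ℕ) (h : Z = Z ≫ iterateHom s n ≫ s) : False := by
  obtain ⟨X, Y, f, g, hfg⟩ := hnp
  have : Closed X := inferInstance
  set F : 𝟙_ C ⟶ (ihom X).obj Y := MonoidalClosed.curry ((ρ_ X).hom ≫ f) with hF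
  set G : 𝟙_ C ⟶ (ihom X).obj Y := MonoidalClosed.curry ((ρ_ X).hom ≫ g) with hG
  obtain ⟨t, ⟨htZ, hts⟩, -⟩ :=
    hN.ex_unique (A := (ihom X).obj Y) F (SemiCartesianMonoidalCategory.toUnit _ ≫ G)
  have key : F = G := by
    calc F = Z ≫ t := htZ.symm
    _ = (Z ≫ iterateHom s n ≫ s) ≫ t := by rw [← h]
    _ = (Z ≫ iterateHom s n) ≫ (s ≫ t) := by simp
    _ = ((Z ≫ iterateHom s n) ≫ t ≫ SemiCartesianMonoidalCategory.toUnit _) ≫ G := by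
        rw [hts]; simp
    _ = G := by
        rw [SemiCartesianMonoidalCategory.toUnit_unique
          ((Z ≫ iterateHom s n) ≫ t ≫ SemiCartesianMonoidalCategory.toUnit _) (𝟙 _)]
        simp
  apply hfg
  have := MonoidalClosed.curry_injective key
  exact (cancel_epi (ρ_ X).hom).mp this

/-- In a cartesian closed category with a natural numbers object `(N, Z, s)` that is
not a preorder, the numerals `n̄ = sⁿ ∘ Z : 1 ⟶ N` are pairwise distinct. -/
theorem stmt17 {C : Type*} [Category C] [CartesianMonoidalCategory C] [MonoidalClosed C]
    {N : C} {Z : 𝟙_ C ⟶ N} {s : N ⟶ N} (hN : IsNNO N Z s)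
    (hnp : ∃ (X Y : C) (f g : X ⟶ Y), f ≠ g)
    (m n : ℕ) (h : Z ≫ iterateHom s m = Z ≫ iterateHom s n) : m = n := by
  obtain ⟨p, hp⟩ := exists_pred hN
  induction m generalizing n with
  | zero =>
    cases n with
    | zero => rfl
    | succ n =>
      exfalso
      exact aux_zero hN hnp n (by simpa [iterateHom] using h)
  | succ m ih =>
    cases n with
    | zero =>
      exfalso
      exact aux_zero hN hnp m (by simpa [iterateHom] using h.symm)
    | succ n =>
      have h' : Z ≫ iterateHom s m = Z ≫ iterateHom s n := by
        have := congrArg (· ≫ p) h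
        simpa [iterateHom, Category.assoc, hp] using this
      rw [ih n h']
end
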